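/- arXiv:1604.05130 — 5 statements merged into one kernel-verified Lean document; each statement's English description precedes it below -/
import Mathlib

section
/- Let K be a group, let A₁ and A₂ be additive abelian groups, and suppose K acts on A := A₁ × A₂ by additive automorphisms. Let H ≤ K and G ≤ K be subgroups such that every element k ∈ K can be written uniquely as k = hg with h ∈ H and g ∈ G, such that for every h ∈ H the map a ↦ h • a sends A₁ × {0} into itself, and for every g ∈ G the map a ↦ g • a sends {0} × A₂ into itself. Set S₁ = {((μ, 0), h) : μ ∈ A₁, h ∈ H} and S₂ = {((0, ν), g) : ν ∈ A₂, g ∈ G} inside the semidirect product A ⋊ K. Then the multiplication map S₁ × S₂ → A ⋊ K, (x, y) ↦ xy, is a bijection. -/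
/-- The multiplication of the semidirect product `A ⋊ K`:
`(a₁, k₁)(a₂, k₂) = (a₁ + k₁ • a₂, k₁ k₂)`. -/
def sdMul {A K : Type*} [AddCommGroup A] [Group K] [DistribMulAction K A]
    (p q : A × K) : A × K :=
  (p.1 + p.2 • q.1, p.2 * q.2)

section Aux

variable {K A₁ A₂ : Type*} [Group K] [AddCommGroup A₁] [AddCommGroup A₂]
    [DistribMulAction K (A₁ × A₂)] (H : Subgroup K)

theorem aux_inj (hH : ∀ h ∈ H, ∀ μ : A₁, (h • ((μ, 0) : A₁ × A₂)).2 = 0) {h : K} (hh : h ∈ H) {ν : A₂}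
    (h0 : (h • ((0, ν) : A₁ × A₂)).2 = 0) : ν = 0 := by
  have hx : h • ((0, ν) : A₁ × A₂) = ((h • ((0, ν) : A₁ × A₂)).1, 0) := by
    ext <;> simp [h0]
  have : ((0, ν) : A₁ × A₂) = h⁻¹ • ((h • ((0, ν) : A₁ × A₂)).1, (0 : A₂)) := by
    rw [← hx, inv_smul_smul]
  have := congrArg Prod.snd this
  simpa [hH h⁻¹ (H.inv_mem hh)] using this

theorem aux_surj (hH : ∀ h ∈ H, ∀ μ : A₁, (h • ((μ, 0) : A₁ × A₂)).2 = 0) {h : K} (hh : h ∈ H) (ν₂ : A₂) :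
    ∃ ν : A₂, (h • ((0, ν) : A₁ × A₂)).2 = ν₂ := by
  set w := h⁻¹ • ((0, ν₂) : A₁ × A₂) with hw
  refine ⟨w.2, ?_⟩
  have hsplit : ((0, w.2) : A₁ × A₂) = w - (w.1, 0) := by ext <;> simp
  rw [hsplit, smul_sub, hw, smul_inv_smul]
  simp [hH h hh]

end Aux

/-- Let `K` act on `A = A₁ × A₂` by additive automorphisms, and let `H, G ≤ K` be
subgroups such that every `k ∈ K` factors uniquely as `k = h g` with `h ∈ H`,
`g ∈ G`, such that `H` preserves `A₁ × {0}` and `G` preserves `{0} × A₂`.  Then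
with `S₁ = {((μ, 0), h)}` and `S₂ = {((0, ν), g)}` inside the semidirect product
`A ⋊ K`, the multiplication map `S₁ × S₂ → A ⋊ K` is a bijection. -/
theorem semidirect_matched_pair_decomposition
    {K A₁ A₂ : Type*} [Group K] [AddCommGroup A₁] [AddCommGroup A₂]
    [DistribMulAction K (A₁ × A₂)]
    (H G : Subgroup K)
    (hfact : ∀ k : K, ∃! p : H × G, (p.1 : K) * (p.2 : K) = k)
    (hH : ∀ h ∈ H, ∀ μ : A₁, (h • ((μ, 0) : A₁ × A₂)).2 = 0)
    (hG : ∀ g ∈ G, ∀ ν : A₂, (g • ((0, ν) : A₁ × A₂)).1 = 0) :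
    Function.Bijective
      (fun p : {x : (A₁ × A₂) × K // x.1.2 = 0 ∧ x.2 ∈ H} ×
               {x : (A₁ × A₂) × K // x.1.1 = 0 ∧ x.2 ∈ G} =>
        sdMul (p.1 : (A₁ × A₂) × K) (p.2 : (A₁ × A₂) × K)) := by
  constructor
  · rintro ⟨⟨⟨a, h⟩, ha, hh⟩, ⟨⟨b, g⟩, hb, hg⟩⟩ ⟨⟨⟨a', h'⟩, ha', hh'⟩, ⟨⟨b', g'⟩, hb', hg'⟩⟩ heq
    dsimp only at ha hh hb hg ha' hh' hb' hg'
    simp only [sdMul, Prod.mk.injEq] at heq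
    obtain ⟨hA, hK⟩ := heq
    -- unique factorization gives h = h', g = g'
    have hfac := (hfact (h * g)).unique (y₁ := (⟨h, hh⟩, ⟨g, hg⟩)) (y₂ := (⟨h', hh'⟩, ⟨g', hg'⟩))
      rfl hK.symm
    have hhh : h = h' := congrArg (fun p => (p.1 : K)) hfac
    have hgg : g = g' := congrArg (fun p => (p.2 : K)) hfac
    subst hhh hgg
    -- additive part
    have hb2 : b = ((0 : A₁), b.2) := by ext <;> simp [hb]
    have hb2' : b' = ((0 : A₁), b'.2) := by ext <;> simp [hb']
    have hdiff : (h • (((0 : A₁), b.2 - b'.2) : A₁ × A₂)).2 = 0 := by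
      have hsub : (((0 : A₁), b.2 - b'.2) : A₁ × A₂) = b - b' := by
        ext <;> simp [hb, hb']
      rw [hsub, smul_sub]
      have h2 : (h • b).2 = (h • b').2 := by
        have := congrArg Prod.snd hA
        simpa [ha, ha'] using this
      simp [h2]
    have hbb : b.2 = b'.2 := sub_eq_zero.mp (aux_inj H hH hh hdiff)
    have hb_eq : b = b' := by rw [hb2, hb2', hbb]
    subst hb_eq
    have ha_eq : a = a' := by
      have := hA
      exact add_right_cancel this
    simp [ha_eq]
  · rintro ⟨c, k⟩
    obtain ⟨⟨⟨h, hh⟩, ⟨g, hg⟩⟩, hk, -⟩ := hfact k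
    obtain ⟨ν, hν⟩ := aux_surj H hH hh c.2
    refine ⟨⟨⟨(c - h • ((0 : A₁), ν), h), ?_, hh⟩, ⟨(((0 : A₁), ν), g), rfl, hg⟩⟩, ?_⟩
    · simp [hν]
    · simp only [sdMul]
      ext <;> simp [hk]
end

section
/- Let (𝔤, 𝔥) be a matched pair of Lie algebras over a field of characteristic zero. Then the direct sum vector space 𝔤 ⊕ 𝔥 equipped with the bracket [(ξ₁, η₁), (ξ₂, η₂)] = ([ξ₁, ξ₂] + η₁ ▷ ξ₂ − η₂ ▷ ξ₁, [η₁, η₂] + η₁ ◁ ξ₂ − η₂ ◁ ξ₁) is a Lie algebra; in particular this bracket is bilinear, alternating, and satisfies the Jacobi identity. -/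
/-- The matched pair bracket on `𝔤 ⊕ 𝔥`:
`[(ξ₁, η₁), (ξ₂, η₂)] = ([ξ₁, ξ₂] + η₁ ▷ ξ₂ − η₂ ▷ ξ₁, [η₁, η₂] + η₁ ◁ ξ₂ − η₂ ◁ ξ₁)`. -/
def matchedPairBracket {k 𝔤 𝔥 : Type*} [Field k]
    [LieRing 𝔤] [LieAlgebra k 𝔤] [LieRing 𝔥] [LieAlgebra k 𝔥]
    (lact : 𝔥 →ₗ[k] 𝔤 →ₗ[k] 𝔤) (ract : 𝔥 →ₗ[k] 𝔤 →ₗ[k] 𝔥)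
    (x y : 𝔤 × 𝔥) : 𝔤 × 𝔥 :=
  (⁅x.1, y.1⁆ + lact x.2 y.1 - lact y.2 x.1,
   ⁅x.2, y.2⁆ + ract x.2 y.1 - ract y.2 x.1)


private lemma jacAux {L : Type*} [LieRing L] (x y z : L) :
    ⁅z, ⁅x, y⁆⁆ = ⁅y, ⁅x, z⁆⁆ - ⁅x, ⁅y, z⁆⁆ := by
  have h1 := lie_skew ⁅x, y⁆ z
  rw [lie_lie] at h1
  rw [neg_eq_iff_eq_neg] at h1
  rw [h1]; abel

private lemma jac3 {L : Type*} [LieRing L] (x y z : L) :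
    ⁅⁅x, y⁆, z⁆ = -⁅⁅y, z⁆, x⁆ - ⁅⁅z, x⁆, y⁆ := by
  rw [lie_lie x y z, lie_lie y z x, lie_lie z x y, ← lie_skew z x, ← lie_skew y x,
    ← lie_skew z y, lie_neg, lie_neg, lie_neg, jacAux x y z]
  abel

/-- For a matched pair `(𝔤, 𝔥)` of Lie algebras over a field of characteristic zero,
the matched pair bracket on `𝔤 ⊕ 𝔥` is bilinear, alternating, and satisfies the
Jacobi identity, i.e. `𝔤 ⊕ 𝔥` is a Lie algebra. -/
theorem matchedPair_lieAlgebra {k 𝔤 𝔥 : Type*} [Field k] [CharZero k]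
    [LieRing 𝔤] [LieAlgebra k 𝔤] [LieRing 𝔥] [LieAlgebra k 𝔥]
    (lact : 𝔥 →ₗ[k] 𝔤 →ₗ[k] 𝔤) (ract : 𝔥 →ₗ[k] 𝔤 →ₗ[k] 𝔥)
    -- `▷` is a left Lie algebra action of `𝔥` on `𝔤`
    (hlact : ∀ (η₁ η₂ : 𝔥) (ξ : 𝔤),
      lact ⁅η₁, η₂⁆ ξ = lact η₁ (lact η₂ ξ) - lact η₂ (lact η₁ ξ))
    -- `◁` is a right Lie algebra action of `𝔤` on `𝔥`
    (hract : ∀ (η : 𝔥) (ξ₁ ξ₂ : 𝔤),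
      ract η ⁅ξ₁, ξ₂⁆ = ract (ract η ξ₁) ξ₂ - ract (ract η ξ₂) ξ₁)
    -- compatibility conditions
    (hcomp₁ : ∀ (η : 𝔥) (ξ₁ ξ₂ : 𝔤),
      lact η ⁅ξ₁, ξ₂⁆ = ⁅lact η ξ₁, ξ₂⁆ + ⁅ξ₁, lact η ξ₂⁆
        + lact (ract η ξ₁) ξ₂ - lact (ract η ξ₂) ξ₁)
    (hcomp₂ : ∀ (η₁ η₂ : 𝔥) (ξ : 𝔤),
      ract ⁅η₁, η₂⁆ ξ = ⁅η₁, ract η₂ ξ⁆ + ⁅ract η₁ ξ, η₂⁆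
        + ract η₁ (lact η₂ ξ) - ract η₂ (lact η₁ ξ)) :
    -- the bracket is bilinear
    (∀ x y z : 𝔤 × 𝔥,
      matchedPairBracket lact ract (x + y) z =
        matchedPairBracket lact ract x z + matchedPairBracket lact ract y z) ∧
    (∀ x y z : 𝔤 × 𝔥,
      matchedPairBracket lact ract x (y + z) =
        matchedPairBracket lact ract x y + matchedPairBracket lact ract x z) ∧
    (∀ (a : k) (x y : 𝔤 × 𝔥),
      matchedPairBracket lact ract (a • x) y = a • matchedPairBracket lact ract x y) ∧
    (∀ (a : k) (x y : 𝔤 × 𝔥),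
      matchedPairBracket lact ract x (a • y) = a • matchedPairBracket lact ract x y) ∧
    -- the bracket is alternating
    (∀ x : 𝔤 × 𝔥, matchedPairBracket lact ract x x = 0) ∧
    -- the bracket satisfies the Jacobi identity
    (∀ x y z : 𝔤 × 𝔥,
      matchedPairBracket lact ract (matchedPairBracket lact ract x y) z
        + matchedPairBracket lact ract (matchedPairBracket lact ract y z) x
        + matchedPairBracket lact ract (matchedPairBracket lact ract z x) y = 0) := by
  refine ⟨?_, ?_, ?_, ?_, ?_, ?_⟩
  · intro x y z
    simp only [matchedPairBracket, Prod.fst_add, Prod.snd_add, add_lie, map_add,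
      LinearMap.add_apply, Prod.mk_add_mk, Prod.mk.injEq]
    constructor <;> abel
  · intro x y z
    simp only [matchedPairBracket, Prod.fst_add, Prod.snd_add, lie_add, map_add,
      LinearMap.add_apply, Prod.mk_add_mk, Prod.mk.injEq]
    constructor <;> abel
  · intro a x y
    simp only [matchedPairBracket, Prod.smul_fst, Prod.smul_snd, smul_lie, map_smul,
      LinearMap.smul_apply, Prod.smul_mk, Prod.mk.injEq]
    constructor <;> module
  · intro a x y
    simp only [matchedPairBracket, Prod.smul_fst, Prod.smul_snd, lie_smul, map_smul,
      LinearMap.smul_apply, Prod.smul_mk, Prod.mk.injEq]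
    constructor <;> module
  · intro x
    simp [matchedPairBracket]
  · intro x y z
    obtain ⟨a, b⟩ := x
    obtain ⟨c, d⟩ := y
    obtain ⟨e, f⟩ := z
    simp only [matchedPairBracket, Prod.mk_add_mk, Prod.mk.injEq, Prod.mk_eq_zero,
      map_add, map_sub, LinearMap.add_apply, LinearMap.sub_apply,
      add_lie, sub_lie, lie_add, lie_sub,
      hlact, hract, hcomp₁, hcomp₂]
    constructor
    · rw [jac3 a c e, ← lie_skew a ((lact f) c), ← lie_skew c ((lact b) e),
        ← lie_skew e ((lact d) a)]
      abel
    · rw [jac3 b d f, ← lie_skew b ((ract d) e), ← lie_skew d ((ract f) a),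
        ← lie_skew f ((ract b) c)]
      abel
end

section
/- Let (𝔤, 𝔥) be a matched pair of finite-dimensional real Lie algebras. For a smooth function F : 𝔤* × 𝔥* → ℝ define its partial gradients δF/δμ(μ, ν) ∈ 𝔤 and δF/δν(μ, ν) ∈ 𝔥 by requiring that the Fréchet derivative of F at (μ, ν) applied to (α, β) ∈ 𝔤* × 𝔥* equals α(δF/δμ) + β(δF/δν). Then the matched Lie-Poisson bracket {F, G}(μ, ν) := ⟨μ, [δF/δμ, δG/δμ]⟩ + ⟨ν, [δF/δν, δG/δν]⟩ + ⟨μ, (δF/δν) ▷ (δG/δμ)⟩ − ⟨μ, (δG/δν) ▷ (δF/δμ)⟩ + ⟨ν, (δF/δν) ◁ (δG/δμ)⟩ − ⟨ν, (δG/δν) ◁ (δF/δμ)⟩ is a Poisson bracket on smooth functions on 𝔤* × 𝔥*: it is ℝ-bilinear, antisymmetric, and satisfies the Jacobi identity {{F, G}, E} + {{G, E}, F} + {{E, F}, G} = 0 for all smooth F, G, E. -/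
/-- The matched Lie-Poisson bracket of two functions on `𝔤* × 𝔥*`:
`{F, G}(μ, ν) = ⟨μ, [δF/δμ, δG/δμ]⟩ + ⟨ν, [δF/δν, δG/δν]⟩
  + ⟨μ, (δF/δν) ▷ (δG/δμ)⟩ − ⟨μ, (δG/δν) ▷ (δF/δμ)⟩
  + ⟨ν, (δF/δν) ◁ (δG/δμ)⟩ − ⟨ν, (δG/δν) ◁ (δF/δμ)⟩`,
where `Dg F`, `Dh F` denote the partial gradients `δF/δμ`, `δF/δν`. -/
def matchedLiePoisson {𝔤 𝔥 : Type*}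
    [NormedAddCommGroup 𝔤] [NormedSpace ℝ 𝔤] [NormedAddCommGroup 𝔥] [NormedSpace ℝ 𝔥]
    (brg : 𝔤 →ₗ[ℝ] 𝔤 →ₗ[ℝ] 𝔤) (brh : 𝔥 →ₗ[ℝ] 𝔥 →ₗ[ℝ] 𝔥)
    (lact : 𝔥 →ₗ[ℝ] 𝔤 →ₗ[ℝ] 𝔤) (ract : 𝔥 →ₗ[ℝ] 𝔤 →ₗ[ℝ] 𝔥)
    (Dg : ((𝔤 →L[ℝ] ℝ) × (𝔥 →L[ℝ] ℝ) → ℝ) → (𝔤 →L[ℝ] ℝ) × (𝔥 →L[ℝ] ℝ) → 𝔤)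
    (Dh : ((𝔤 →L[ℝ] ℝ) × (𝔥 →L[ℝ] ℝ) → ℝ) → (𝔤 →L[ℝ] ℝ) × (𝔥 →L[ℝ] ℝ) → 𝔥)
    (F G : (𝔤 →L[ℝ] ℝ) × (𝔥 →L[ℝ] ℝ) → ℝ)
    (p : (𝔤 →L[ℝ] ℝ) × (𝔥 →L[ℝ] ℝ)) : ℝ :=
  p.1 (brg (Dg F p) (Dg G p)) + p.2 (brh (Dh F p) (Dh G p))
    + p.1 (lact (Dh F p) (Dg G p)) - p.1 (lact (Dh G p) (Dg F p))
    + p.2 (ract (Dh F p) (Dg G p)) - p.2 (ract (Dh G p) (Dg F p))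

open ContinuousLinearMap
set_option maxSynthPendingDepth 3
set_option maxHeartbeats 1000000

section MLPAux

variable {𝔤 𝔥 : Type*}
  [NormedAddCommGroup 𝔤] [NormedSpace ℝ 𝔤] [NormedAddCommGroup 𝔥] [NormedSpace ℝ 𝔥]

/-- The canonical pairing of `𝔤 × 𝔥` against `𝔤* × 𝔥*`. -/
noncomputable def mlpPair : (𝔤 × 𝔥) →ₗ[ℝ] (((𝔤 →L[ℝ] ℝ) × (𝔥 →L[ℝ] ℝ)) →L[ℝ] ℝ) where
  toFun v := ((ContinuousLinearMap.apply ℝ ℝ v.1).comp (ContinuousLinearMap.fst ℝ _ _)) +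
    ((ContinuousLinearMap.apply ℝ ℝ v.2).comp (ContinuousLinearMap.snd ℝ _ _))
  map_add' v w := by refine ContinuousLinearMap.ext fun q => ?_; simp; ring
  map_smul' c v := by refine ContinuousLinearMap.ext fun q => ?_; simp [smul_add]

@[simp] lemma mlpPair_apply (v : 𝔤 × 𝔥) (q : (𝔤 →L[ℝ] ℝ) × (𝔥 →L[ℝ] ℝ)) :
    mlpPair v q = q.1 v.1 + q.2 v.2 := rfl

lemma mlpPair_injective : Function.Injective (mlpPair (𝔤 := 𝔤) (𝔥 := 𝔥)) := by
  intro v w h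
  have h' : ∀ q : (𝔤 →L[ℝ] ℝ) × (𝔥 →L[ℝ] ℝ), q.1 v.1 + q.2 v.2 = q.1 w.1 + q.2 w.2 := by
    intro q
    simpa using congrArg (fun φ => φ q) h
  have h1 : v.1 = w.1 := by
    by_contra hne
    obtain ⟨f, hf⟩ := SeparatingDual.exists_ne_zero (R := ℝ) (sub_ne_zero.2 hne)
    have := h' (f, 0)
    simp at this
    exact hf (by simpa [map_sub, sub_eq_zero] using this)
  have h2 : v.2 = w.2 := by
    by_contra hne
    obtain ⟨f, hf⟩ := SeparatingDual.exists_ne_zero (R := ℝ) (sub_ne_zero.2 hne)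
    have := h' (0, f)
    simp at this
    exact hf (by simpa [map_sub, sub_eq_zero] using this)
  exact Prod.ext h1 h2

end MLPAux

section MLP2

variable {𝔤 𝔥 : Type*}
  [NormedAddCommGroup 𝔤] [NormedSpace ℝ 𝔤] [NormedAddCommGroup 𝔥] [NormedSpace ℝ 𝔥]
  [FiniteDimensional ℝ 𝔤] [FiniteDimensional ℝ 𝔥]

lemma mlp_finrank_eq :
    Module.finrank ℝ (𝔤 × 𝔥) =
      Module.finrank ℝ ((((𝔤 →L[ℝ] ℝ) × (𝔥 →L[ℝ] ℝ)) →L[ℝ] ℝ)) := by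
  have e1 : ((((𝔤 →L[ℝ] ℝ) × (𝔥 →L[ℝ] ℝ)) →ₗ[ℝ] ℝ)) ≃ₗ[ℝ]
      ((((𝔤 →L[ℝ] ℝ) × (𝔥 →L[ℝ] ℝ)) →L[ℝ] ℝ)) := LinearMap.toContinuousLinearMap
  have e2 : (𝔤 →ₗ[ℝ] ℝ) ≃ₗ[ℝ] (𝔤 →L[ℝ] ℝ) := LinearMap.toContinuousLinearMap
  have e3 : (𝔥 →ₗ[ℝ] ℝ) ≃ₗ[ℝ] (𝔥 →L[ℝ] ℝ) := LinearMap.toContinuousLinearMap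
  rw [← e1.finrank_eq]
  rw [show Module.finrank ℝ ((((𝔤 →L[ℝ] ℝ) × (𝔥 →L[ℝ] ℝ)) →ₗ[ℝ] ℝ))
      = Module.finrank ℝ ((𝔤 →L[ℝ] ℝ) × (𝔥 →L[ℝ] ℝ)) from Subspace.dual_finrank_eq]
  rw [Module.finrank_prod, Module.finrank_prod, ← e2.finrank_eq, ← e3.finrank_eq,
    Subspace.dual_finrank_eq, Subspace.dual_finrank_eq]

/-- The pairing as a linear equivalence, in finite dimensions. -/
noncomputable def mlpPairEquiv :
    (𝔤 × 𝔥) ≃ₗ[ℝ] ((((𝔤 →L[ℝ] ℝ) × (𝔥 →L[ℝ] ℝ)) →L[ℝ] ℝ)) :=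
  LinearMap.linearEquivOfInjective mlpPair mlpPair_injective mlp_finrank_eq

@[simp] lemma mlpPairEquiv_apply (v : 𝔤 × 𝔥) :
    (mlpPairEquiv v : (((𝔤 →L[ℝ] ℝ) × (𝔥 →L[ℝ] ℝ)) →L[ℝ] ℝ)) = mlpPair v := rfl

@[simp] lemma mlpPair_symm (x : (((𝔤 →L[ℝ] ℝ) × (𝔥 →L[ℝ] ℝ)) →L[ℝ] ℝ)) :
    mlpPair (mlpPairEquiv.symm x : 𝔤 × 𝔥) = x := by
  have := mlpPairEquiv.apply_symm_apply x
  rwa [mlpPairEquiv_apply] at this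

end MLP2

section MLP3

variable {𝔤 𝔥 : Type*}
  [NormedAddCommGroup 𝔤] [NormedSpace ℝ 𝔤] [NormedAddCommGroup 𝔥] [NormedSpace ℝ 𝔥]
  (brg : 𝔤 →ₗ[ℝ] 𝔤 →ₗ[ℝ] 𝔤) (brh : 𝔥 →ₗ[ℝ] 𝔥 →ₗ[ℝ] 𝔥)
  (lact : 𝔥 →ₗ[ℝ] 𝔤 →ₗ[ℝ] 𝔤) (ract : 𝔥 →ₗ[ℝ] 𝔤 →ₗ[ℝ] 𝔥)

/-- The matched pair bracket on `𝔤 × 𝔥`. -/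
def mlpBr : (𝔤 × 𝔥) →ₗ[ℝ] (𝔤 × 𝔥) →ₗ[ℝ] (𝔤 × 𝔥) :=
  LinearMap.mk₂ ℝ
    (fun v w => (brg v.1 w.1 + lact v.2 w.1 - lact w.2 v.1,
                 brh v.2 w.2 + ract v.2 w.1 - ract w.2 v.1))
    (by intro v v' w; ext <;> simp <;> abel)
    (by intro c v w; ext <;> simp [smul_sub] <;> abel)
    (by intro v w w'; ext <;> simp <;> abel)
    (by intro c v w; ext <;> simp [smul_sub] <;> abel)

@[simp] lemma mlpBr_apply (v w : 𝔤 × 𝔥) :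
    mlpBr brg brh lact ract v w =
      (brg v.1 w.1 + lact v.2 w.1 - lact w.2 v.1,
       brh v.2 w.2 + ract v.2 w.1 - ract w.2 v.1) := rfl

end MLP3

section MLP4

variable {𝔤 𝔥 : Type*}
  [NormedAddCommGroup 𝔤] [NormedSpace ℝ 𝔤] [NormedAddCommGroup 𝔥] [NormedSpace ℝ 𝔥]
  (brg : 𝔤 →ₗ[ℝ] 𝔤 →ₗ[ℝ] 𝔤) (brh : 𝔥 →ₗ[ℝ] 𝔥 →ₗ[ℝ] 𝔥)
  (lact : 𝔥 →ₗ[ℝ] 𝔤 →ₗ[ℝ] 𝔤) (ract : 𝔥 →ₗ[ℝ] 𝔤 →ₗ[ℝ] 𝔥)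

lemma mlp_skew {M : Type*} [AddCommGroup M] [Module ℝ M]
    (b : M →ₗ[ℝ] M →ₗ[ℝ] M) (halt : ∀ x : M, b x x = 0) (x y : M) :
    b x y = - b y x := by
  have h := halt (x + y)
  simp only [map_add, LinearMap.add_apply, halt] at h
  rw [eq_neg_iff_add_eq_zero]
  rw [zero_add, add_zero] at h
  linear_combination (norm := abel) h

lemma mlpBr_alt (hg_alt : ∀ ξ : 𝔤, brg ξ ξ = 0) (hh_alt : ∀ η : 𝔥, brh η η = 0)
    (v : 𝔤 × 𝔥) : mlpBr brg brh lact ract v v = 0 := by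
  ext <;> simp [hg_alt, hh_alt]

end MLP4

section MLP5

variable {𝔤 𝔥 : Type*}
  [NormedAddCommGroup 𝔤] [NormedSpace ℝ 𝔤] [NormedAddCommGroup 𝔥] [NormedSpace ℝ 𝔥]
  (brg : 𝔤 →ₗ[ℝ] 𝔤 →ₗ[ℝ] 𝔤) (brh : 𝔥 →ₗ[ℝ] 𝔥 →ₗ[ℝ] 𝔥)
  (lact : 𝔥 →ₗ[ℝ] 𝔤 →ₗ[ℝ] 𝔤) (ract : 𝔥 →ₗ[ℝ] 𝔤 →ₗ[ℝ] 𝔥)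

lemma mlpBr_jacobi
    (hg_alt : ∀ ξ : 𝔤, brg ξ ξ = 0)
    (hg_jacobi : ∀ ξ₁ ξ₂ ξ₃ : 𝔤,
      brg (brg ξ₁ ξ₂) ξ₃ + brg (brg ξ₂ ξ₃) ξ₁ + brg (brg ξ₃ ξ₁) ξ₂ = 0)
    (hh_alt : ∀ η : 𝔥, brh η η = 0)
    (hh_jacobi : ∀ η₁ η₂ η₃ : 𝔥,
      brh (brh η₁ η₂) η₃ + brh (brh η₂ η₃) η₁ + brh (brh η₃ η₁) η₂ = 0)
    (hlact : ∀ (η₁ η₂ : 𝔥) (ξ : 𝔤),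
      lact (brh η₁ η₂) ξ = lact η₁ (lact η₂ ξ) - lact η₂ (lact η₁ ξ))
    (hract : ∀ (η : 𝔥) (ξ₁ ξ₂ : 𝔤),
      ract η (brg ξ₁ ξ₂) = ract (ract η ξ₁) ξ₂ - ract (ract η ξ₂) ξ₁)
    (hcomp₁ : ∀ (η : 𝔥) (ξ₁ ξ₂ : 𝔤),
      lact η (brg ξ₁ ξ₂) = brg (lact η ξ₁) ξ₂ + brg ξ₁ (lact η ξ₂)
        + lact (ract η ξ₁) ξ₂ - lact (ract η ξ₂) ξ₁)
    (hcomp₂ : ∀ (η₁ η₂ : 𝔥) (ξ : 𝔤),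
      ract (brh η₁ η₂) ξ = brh η₁ (ract η₂ ξ) + brh (ract η₁ ξ) η₂
        + ract η₁ (lact η₂ ξ) - ract η₂ (lact η₁ ξ))
    (v w u : 𝔤 × 𝔥) :
    mlpBr brg brh lact ract (mlpBr brg brh lact ract v w) u
      + mlpBr brg brh lact ract (mlpBr brg brh lact ract w u) v
      + mlpBr brg brh lact ract (mlpBr brg brh lact ract u v) w = 0 := by
  obtain ⟨ξ₁, η₁⟩ := v
  obtain ⟨ξ₂, η₂⟩ := w
  obtain ⟨ξ₃, η₃⟩ := u
  have skg := mlp_skew brg hg_alt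
  have skh := mlp_skew brh hh_alt
  ext
  · simp only [mlpBr_apply, Prod.fst_add, Prod.snd_add, map_add, map_sub,
      LinearMap.add_apply, LinearMap.sub_apply, Prod.fst_zero]
    rw [hlact η₁ η₂ ξ₃, hlact η₂ η₃ ξ₁, hlact η₃ η₁ ξ₂,
      hcomp₁ η₃ ξ₁ ξ₂, hcomp₁ η₁ ξ₂ ξ₃, hcomp₁ η₂ ξ₃ ξ₁,
      skg ξ₁ (lact η₃ ξ₂), skg ξ₂ (lact η₁ ξ₃), skg ξ₃ (lact η₂ ξ₁),
      show brg (brg ξ₁ ξ₂) ξ₃ = - brg (brg ξ₂ ξ₃) ξ₁ - brg (brg ξ₃ ξ₁) ξ₂ by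
        have := hg_jacobi ξ₁ ξ₂ ξ₃; linear_combination (norm := abel) this]
    abel
  · simp only [mlpBr_apply, Prod.fst_add, Prod.snd_add, map_add, map_sub,
      LinearMap.add_apply, LinearMap.sub_apply, Prod.snd_zero]
    rw [hract η₃ ξ₁ ξ₂, hract η₁ ξ₂ ξ₃, hract η₂ ξ₃ ξ₁,
      hcomp₂ η₁ η₂ ξ₃, hcomp₂ η₂ η₃ ξ₁, hcomp₂ η₃ η₁ ξ₂,
      skh η₃ (ract η₁ ξ₂), skh η₁ (ract η₂ ξ₃), skh η₂ (ract η₃ ξ₁),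
      show brh (brh η₁ η₂) η₃ = - brh (brh η₂ η₃) η₁ - brh (brh η₃ η₁) η₂ by
        have := hh_jacobi η₁ η₂ η₃; linear_combination (norm := abel) this]
    abel

end MLP5

section MLP6

variable {𝔤 𝔥 : Type*}
  [NormedAddCommGroup 𝔤] [NormedSpace ℝ 𝔤] [NormedAddCommGroup 𝔥] [NormedSpace ℝ 𝔥]
  [FiniteDimensional ℝ 𝔤] [FiniteDimensional ℝ 𝔥]

/-- The element `q` of `𝔤* × 𝔥*` with `⟨v, q⟩ = ⟨B v w, p⟩` for all `v`. -/
noncomputable def mlpCoad (B : (𝔤 × 𝔥) →ₗ[ℝ] (𝔤 × 𝔥) →ₗ[ℝ] (𝔤 × 𝔥))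
    (p : (𝔤 →L[ℝ] ℝ) × (𝔥 →L[ℝ] ℝ)) (w : 𝔤 × 𝔥) : (𝔤 →L[ℝ] ℝ) × (𝔥 →L[ℝ] ℝ) :=
  (LinearMap.toContinuousLinearMap
    ((ContinuousLinearMap.apply ℝ ℝ p).toLinearMap ∘ₗ mlpPair ∘ₗ (B.flip w) ∘ₗ
      LinearMap.inl ℝ 𝔤 𝔥),
   LinearMap.toContinuousLinearMap
    ((ContinuousLinearMap.apply ℝ ℝ p).toLinearMap ∘ₗ mlpPair ∘ₗ (B.flip w) ∘ₗ
      LinearMap.inr ℝ 𝔤 𝔥))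

lemma mlpCoad_spec (B : (𝔤 × 𝔥) →ₗ[ℝ] (𝔤 × 𝔥) →ₗ[ℝ] (𝔤 × 𝔥))
    (p : (𝔤 →L[ℝ] ℝ) × (𝔥 →L[ℝ] ℝ)) (w v : 𝔤 × 𝔥) :
    mlpPair v (mlpCoad B p w) = mlpPair (B v w) p := by
  have hv : ((v.1, 0) : 𝔤 × 𝔥) + (0, v.2) = v := by simp
  have : mlpPair v (mlpCoad B p w)
      = mlpPair (B (v.1, (0:𝔥)) w) p + mlpPair (B ((0:𝔤), v.2) w) p := by
    simp [mlpCoad, mlpPair_apply]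
  rw [this, ← ContinuousLinearMap.add_apply, ← map_add, ← LinearMap.add_apply, ← map_add, hv]

end MLP6

section MLP7

variable {𝔤 𝔥 : Type*}
  [NormedAddCommGroup 𝔤] [NormedSpace ℝ 𝔤] [NormedAddCommGroup 𝔥] [NormedSpace ℝ 𝔥]
  [FiniteDimensional ℝ 𝔤] [FiniteDimensional ℝ 𝔥]

/-- The inverse pairing as a continuous linear map. -/
noncomputable def mlpIota : ((((𝔤 →L[ℝ] ℝ) × (𝔥 →L[ℝ] ℝ)) →L[ℝ] ℝ)) →L[ℝ] (𝔤 × 𝔥) :=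
  LinearMap.toContinuousLinearMap (mlpPairEquiv (𝔤 := 𝔤) (𝔥 := 𝔥)).symm.toLinearMap

@[simp] lemma mlpIota_apply (x : (((𝔤 →L[ℝ] ℝ) × (𝔥 →L[ℝ] ℝ)) →L[ℝ] ℝ)) :
    (mlpIota x : 𝔤 × 𝔥) = mlpPairEquiv.symm x := rfl

/-- The bracket paired into the double dual, as a continuous bilinear map. -/
noncomputable def mlpBc (B : (𝔤 × 𝔥) →ₗ[ℝ] (𝔤 × 𝔥) →ₗ[ℝ] (𝔤 × 𝔥)) :
    (𝔤 × 𝔥) →L[ℝ] (𝔤 × 𝔥) →L[ℝ] ((((𝔤 →L[ℝ] ℝ) × (𝔥 →L[ℝ] ℝ)) →L[ℝ] ℝ)) :=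
  LinearMap.toContinuousLinearMap
    (((LinearMap.toContinuousLinearMap
        (E := 𝔤 × 𝔥) (F' := (((𝔤 →L[ℝ] ℝ) × (𝔥 →L[ℝ] ℝ)) →L[ℝ] ℝ))).toLinearMap).comp
      (B.compr₂ mlpPair))

@[simp] lemma mlpBc_apply (B : (𝔤 × 𝔥) →ₗ[ℝ] (𝔤 × 𝔥) →ₗ[ℝ] (𝔤 × 𝔥)) (v w : 𝔤 × 𝔥) :
    mlpBc B v w = mlpPair (B v w) := rfl

end MLP7

section MLP8

variable {𝔤 𝔥 : Type*}
  [NormedAddCommGroup 𝔤] [NormedSpace ℝ 𝔤] [NormedAddCommGroup 𝔥] [NormedSpace ℝ 𝔥]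
  [FiniteDimensional ℝ 𝔤] [FiniteDimensional ℝ 𝔥]

lemma mlp_top_add_one :
    ((⊤ : ℕ∞) : WithTop ℕ∞) + 1 ≤ ((⊤ : ℕ∞) : WithTop ℕ∞) := by
  norm_cast

lemma mlp_two_le : (2 : WithTop ℕ∞) ≤ ((⊤ : ℕ∞) : WithTop ℕ∞) := by
  rw [show (2 : WithTop ℕ∞) = ((2 : ℕ∞) : WithTop ℕ∞) by norm_cast]
  exact WithTop.coe_le_coe.2 le_top

lemma mlp_one_le : (1 : WithTop ℕ∞) ≤ ((⊤ : ℕ∞) : WithTop ℕ∞) := by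
  rw [show (1 : WithTop ℕ∞) = ((1 : ℕ∞) : WithTop ℕ∞) by norm_cast]
  exact WithTop.coe_le_coe.2 le_top

lemma mlp_grad_contDiff (F : (𝔤 →L[ℝ] ℝ) × (𝔥 →L[ℝ] ℝ) → ℝ)
    (hF : ContDiff ℝ (⊤ : ℕ∞) F) :
    ContDiff ℝ (⊤ : ℕ∞) (fun p => (mlpIota (fderiv ℝ F p) : 𝔤 × 𝔥)) :=
  (mlpIota (𝔤 := 𝔤) (𝔥 := 𝔥)).contDiff.comp (hF.fderiv_right mlp_top_add_one)

lemma mlp_grad_hasFDerivAt (F : (𝔤 →L[ℝ] ℝ) × (𝔥 →L[ℝ] ℝ) → ℝ)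
    (hF : ContDiff ℝ (⊤ : ℕ∞) F) (p : (𝔤 →L[ℝ] ℝ) × (𝔥 →L[ℝ] ℝ)) :
    HasFDerivAt (fun p' => (mlpIota (fderiv ℝ F p') : 𝔤 × 𝔥))
      (mlpIota.comp (fderiv ℝ (fderiv ℝ F) p)) p := by
  have hdF : HasFDerivAt (fderiv ℝ F) (fderiv ℝ (fderiv ℝ F) p) p :=
    (((hF.fderiv_right mlp_top_add_one).differentiable (by simp)) p).hasFDerivAt
  exact mlpIota.hasFDerivAt.comp p hdF

lemma mlp_bracket_contDiff (B : (𝔤 × 𝔥) →ₗ[ℝ] (𝔤 × 𝔥) →ₗ[ℝ] (𝔤 × 𝔥))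
    (F G : (𝔤 →L[ℝ] ℝ) × (𝔥 →L[ℝ] ℝ) → ℝ)
    (hF : ContDiff ℝ (⊤ : ℕ∞) F) (hG : ContDiff ℝ (⊤ : ℕ∞) G) :
    ContDiff ℝ (⊤ : ℕ∞) (fun p' =>
      mlpPair (B (mlpIota (fderiv ℝ F p')) (mlpIota (fderiv ℝ G p'))) p') := by
  have h1 : ContDiff ℝ (⊤ : ℕ∞) (fun p' => mlpBc B (mlpIota (fderiv ℝ F p'))) :=
    (mlpBc B).contDiff.comp (mlp_grad_contDiff F hF)
  have h2 : ContDiff ℝ (⊤ : ℕ∞)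
      (fun p' => mlpBc B (mlpIota (fderiv ℝ F p')) (mlpIota (fderiv ℝ G p'))) :=
    h1.clm_apply (mlp_grad_contDiff G hG)
  exact h2.clm_apply contDiff_id

lemma mlp_bracket_fderiv (B : (𝔤 × 𝔥) →ₗ[ℝ] (𝔤 × 𝔥) →ₗ[ℝ] (𝔤 × 𝔥))
    (F G : (𝔤 →L[ℝ] ℝ) × (𝔥 →L[ℝ] ℝ) → ℝ)
    (hF : ContDiff ℝ (⊤ : ℕ∞) F) (hG : ContDiff ℝ (⊤ : ℕ∞) G)
    (p q : (𝔤 →L[ℝ] ℝ) × (𝔥 →L[ℝ] ℝ)) :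
    fderiv ℝ (fun p' =>
        mlpPair (B (mlpIota (fderiv ℝ F p')) (mlpIota (fderiv ℝ G p'))) p') p q
      = mlpPair (B (mlpIota (fderiv ℝ F p)) (mlpIota (fderiv ℝ G p))) q
        + mlpPair (B (mlpIota (fderiv ℝ (fderiv ℝ F) p q)) (mlpIota (fderiv ℝ G p))) p
        + mlpPair (B (mlpIota (fderiv ℝ F p)) (mlpIota (fderiv ℝ (fderiv ℝ G) p q))) p := by
  have h1 : HasFDerivAt (fun p' => mlpBc B (mlpIota (fderiv ℝ F p')))
      ((mlpBc B).comp (mlpIota.comp (fderiv ℝ (fderiv ℝ F) p))) p :=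
    (mlpBc B).hasFDerivAt.comp p (mlp_grad_hasFDerivAt F hF p)
  have h2 := h1.clm_apply (mlp_grad_hasFDerivAt G hG p)
  have h3 := h2.clm_apply (hasFDerivAt_id p)
  have h4 : HasFDerivAt (fun p' =>
      mlpPair (B (mlpIota (fderiv ℝ F p')) (mlpIota (fderiv ℝ G p'))) p') _ p := h3
  rw [h4.fderiv]
  simp only [ContinuousLinearMap.add_apply, ContinuousLinearMap.comp_apply,
    ContinuousLinearMap.flip_apply, ContinuousLinearMap.coe_id', id_eq, mlpBc_apply]
  abel

end MLP8

section MLP9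

variable {𝔤 𝔥 : Type*}
  [NormedAddCommGroup 𝔤] [NormedSpace ℝ 𝔤] [NormedAddCommGroup 𝔥] [NormedSpace ℝ 𝔥]
  [FiniteDimensional ℝ 𝔤] [FiniteDimensional ℝ 𝔥]

lemma mlpPair_iota_apply (x : (((𝔤 →L[ℝ] ℝ) × (𝔥 →L[ℝ] ℝ)) →L[ℝ] ℝ))
    (q : (𝔤 →L[ℝ] ℝ) × (𝔥 →L[ℝ] ℝ)) :
    mlpPair (mlpIota x : 𝔤 × 𝔥) q = x q := by
  rw [mlpIota_apply]
  exact congrArg (fun φ => φ q) (mlpPair_symm x)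

end MLP9


/-- For a matched pair `(𝔤, 𝔥)` of finite-dimensional real Lie algebras, the matched
Lie-Poisson bracket is a Poisson bracket on smooth functions on `𝔤* × 𝔥*`: it is
`ℝ`-bilinear, antisymmetric, and satisfies the Jacobi identity.  Here the Lie algebra
structures of `𝔤` and `𝔥` are given by the bilinear brackets `brg`, `brh`, the mutual
actions by the bilinear maps `lact` (`▷`) and `ract` (`◁`), and `Dg F`, `Dh F` are the
partial gradients `δF/δμ ∈ 𝔤`, `δF/δν ∈ 𝔥`, defined by requiring that the Fréchet
derivative of `F` at `(μ, ν)` applied to `(α, β)` equals `α(δF/δμ) + β(δF/δν)`. -/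
theorem matchedLiePoisson_is_poisson_bracket {𝔤 𝔥 : Type*}
    [NormedAddCommGroup 𝔤] [NormedSpace ℝ 𝔤] [FiniteDimensional ℝ 𝔤]
    [NormedAddCommGroup 𝔥] [NormedSpace ℝ 𝔥] [FiniteDimensional ℝ 𝔥]
    (brg : 𝔤 →ₗ[ℝ] 𝔤 →ₗ[ℝ] 𝔤) (brh : 𝔥 →ₗ[ℝ] 𝔥 →ₗ[ℝ] 𝔥)
    (lact : 𝔥 →ₗ[ℝ] 𝔤 →ₗ[ℝ] 𝔤) (ract : 𝔥 →ₗ[ℝ] 𝔤 →ₗ[ℝ] 𝔥)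
    -- `𝔤` is a Lie algebra
    (hg_alt : ∀ ξ : 𝔤, brg ξ ξ = 0)
    (hg_jacobi : ∀ ξ₁ ξ₂ ξ₃ : 𝔤,
      brg (brg ξ₁ ξ₂) ξ₃ + brg (brg ξ₂ ξ₃) ξ₁ + brg (brg ξ₃ ξ₁) ξ₂ = 0)
    -- `𝔥` is a Lie algebra
    (hh_alt : ∀ η : 𝔥, brh η η = 0)
    (hh_jacobi : ∀ η₁ η₂ η₃ : 𝔥,
      brh (brh η₁ η₂) η₃ + brh (brh η₂ η₃) η₁ + brh (brh η₃ η₁) η₂ = 0)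
    -- `▷` is a left Lie algebra action of `𝔥` on `𝔤`
    (hlact : ∀ (η₁ η₂ : 𝔥) (ξ : 𝔤),
      lact (brh η₁ η₂) ξ = lact η₁ (lact η₂ ξ) - lact η₂ (lact η₁ ξ))
    -- `◁` is a right Lie algebra action of `𝔤` on `𝔥`
    (hract : ∀ (η : 𝔥) (ξ₁ ξ₂ : 𝔤),
      ract η (brg ξ₁ ξ₂) = ract (ract η ξ₁) ξ₂ - ract (ract η ξ₂) ξ₁)
    -- compatibility conditions
    (hcomp₁ : ∀ (η : 𝔥) (ξ₁ ξ₂ : 𝔤),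
      lact η (brg ξ₁ ξ₂) = brg (lact η ξ₁) ξ₂ + brg ξ₁ (lact η ξ₂)
        + lact (ract η ξ₁) ξ₂ - lact (ract η ξ₂) ξ₁)
    (hcomp₂ : ∀ (η₁ η₂ : 𝔥) (ξ : 𝔤),
      ract (brh η₁ η₂) ξ = brh η₁ (ract η₂ ξ) + brh (ract η₁ ξ) η₂
        + ract η₁ (lact η₂ ξ) - ract η₂ (lact η₁ ξ))
    -- the partial gradients, defined via the Fréchet derivative
    (Dg : ((𝔤 →L[ℝ] ℝ) × (𝔥 →L[ℝ] ℝ) → ℝ) → (𝔤 →L[ℝ] ℝ) × (𝔥 →L[ℝ] ℝ) → 𝔤)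
    (Dh : ((𝔤 →L[ℝ] ℝ) × (𝔥 →L[ℝ] ℝ) → ℝ) → (𝔤 →L[ℝ] ℝ) × (𝔥 →L[ℝ] ℝ) → 𝔥)
    (hgrad : ∀ F : (𝔤 →L[ℝ] ℝ) × (𝔥 →L[ℝ] ℝ) → ℝ, ContDiff ℝ (⊤ : ℕ∞) F →
      ∀ (p : (𝔤 →L[ℝ] ℝ) × (𝔥 →L[ℝ] ℝ)) (α : 𝔤 →L[ℝ] ℝ) (β : 𝔥 →L[ℝ] ℝ),
        fderiv ℝ F p (α, β) = α (Dg F p) + β (Dh F p)) :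
    -- `ℝ`-bilinearity
    (∀ (a b : ℝ) (F G E : (𝔤 →L[ℝ] ℝ) × (𝔥 →L[ℝ] ℝ) → ℝ),
      ContDiff ℝ (⊤ : ℕ∞) F → ContDiff ℝ (⊤ : ℕ∞) G → ContDiff ℝ (⊤ : ℕ∞) E →
      ∀ p, matchedLiePoisson brg brh lact ract Dg Dh (fun q => a * F q + b * G q) E p =
        a * matchedLiePoisson brg brh lact ract Dg Dh F E p
          + b * matchedLiePoisson brg brh lact ract Dg Dh G E p) ∧
    (∀ (a b : ℝ) (F G E : (𝔤 →L[ℝ] ℝ) × (𝔥 →L[ℝ] ℝ) → ℝ),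
      ContDiff ℝ (⊤ : ℕ∞) F → ContDiff ℝ (⊤ : ℕ∞) G → ContDiff ℝ (⊤ : ℕ∞) E →
      ∀ p, matchedLiePoisson brg brh lact ract Dg Dh E (fun q => a * F q + b * G q) p =
        a * matchedLiePoisson brg brh lact ract Dg Dh E F p
          + b * matchedLiePoisson brg brh lact ract Dg Dh E G p) ∧
    -- antisymmetry
    (∀ F G : (𝔤 →L[ℝ] ℝ) × (𝔥 →L[ℝ] ℝ) → ℝ,
      ContDiff ℝ (⊤ : ℕ∞) F → ContDiff ℝ (⊤ : ℕ∞) G →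
      ∀ p, matchedLiePoisson brg brh lact ract Dg Dh F G p =
        - matchedLiePoisson brg brh lact ract Dg Dh G F p) ∧
    -- the Jacobi identity
    (∀ F G E : (𝔤 →L[ℝ] ℝ) × (𝔥 →L[ℝ] ℝ) → ℝ,
      ContDiff ℝ (⊤ : ℕ∞) F → ContDiff ℝ (⊤ : ℕ∞) G → ContDiff ℝ (⊤ : ℕ∞) E →
      ∀ p, matchedLiePoisson brg brh lact ract Dg Dh
              (fun q => matchedLiePoisson brg brh lact ract Dg Dh F G q) E p
        + matchedLiePoisson brg brh lact ract Dg Dh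
              (fun q => matchedLiePoisson brg brh lact ract Dg Dh G E q) F p
        + matchedLiePoisson brg brh lact ract Dg Dh
              (fun q => matchedLiePoisson brg brh lact ract Dg Dh E F q) G p = 0) := by
  have skg := mlp_skew brg hg_alt
  have skh := mlp_skew brh hh_alt
  have skB := mlp_skew (mlpBr brg brh lact ract)
    (mlpBr_alt brg brh lact ract hg_alt hh_alt)
  -- the bracket as a pairing against the product bracket
  have hmlp : ∀ (F G : (𝔤 →L[ℝ] ℝ) × (𝔥 →L[ℝ] ℝ) → ℝ) p,
      matchedLiePoisson brg brh lact ract Dg Dh F G p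
        = mlpPair (mlpBr brg brh lact ract (Dg F p, Dh F p) (Dg G p, Dh G p)) p := by
    intro F G p
    simp only [matchedLiePoisson, mlpBr_apply, mlpPair_apply, map_add, map_sub]
    ring
  -- identification of the gradient
  have hD : ∀ F : (𝔤 →L[ℝ] ℝ) × (𝔥 →L[ℝ] ℝ) → ℝ, ContDiff ℝ (⊤ : ℕ∞) F →
      ∀ p, ((Dg F p, Dh F p) : 𝔤 × 𝔥) = mlpIota (fderiv ℝ F p) := by
    intro F hF p
    rw [mlpIota_apply]
    apply mlpPairEquiv.injective
    rw [LinearEquiv.apply_symm_apply]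
    refine ContinuousLinearMap.ext fun q => ?_
    rw [mlpPairEquiv_apply, mlpPair_apply]
    have h := hgrad F hF p q.1 q.2
    simpa using h.symm
  refine ⟨?_, ?_, ?_, ?_⟩
  · -- left linearity
    intro a b F G E hF hG hE p
    have hcomb : ContDiff ℝ (⊤ : ℕ∞) (fun q => a * F q + b * G q) :=
      (contDiff_const.mul hF).add (contDiff_const.mul hG)
    have hdF : DifferentiableAt ℝ F p := (hF.differentiable (by simp)) p
    have hdG : DifferentiableAt ℝ G p := (hG.differentiable (by simp)) p
    have hfd : fderiv ℝ (fun q => a * F q + b * G q) p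
        = a • fderiv ℝ F p + b • fderiv ℝ G p := by
      rw [fderiv_fun_add (hdF.const_mul a) (hdG.const_mul b),
        fderiv_const_mul hdF a, fderiv_const_mul hdG b]
    have hDc := hD _ hcomb p
    rw [hfd, map_add, map_smul, map_smul, ← hD F hF p, ← hD G hG p] at hDc
    rw [Prod.ext_iff] at hDc
    obtain ⟨h1, h2⟩ := hDc
    simp only [Prod.fst_add, Prod.snd_add, Prod.smul_fst, Prod.smul_snd] at h1 h2
    simp only [matchedLiePoisson, h1, h2, map_add, map_smul, LinearMap.add_apply,
      LinearMap.smul_apply, smul_eq_mul]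
    ring
  · -- right linearity
    intro a b F G E hF hG hE p
    have hcomb : ContDiff ℝ (⊤ : ℕ∞) (fun q => a * F q + b * G q) :=
      (contDiff_const.mul hF).add (contDiff_const.mul hG)
    have hdF : DifferentiableAt ℝ F p := (hF.differentiable (by simp)) p
    have hdG : DifferentiableAt ℝ G p := (hG.differentiable (by simp)) p
    have hfd : fderiv ℝ (fun q => a * F q + b * G q) p
        = a • fderiv ℝ F p + b • fderiv ℝ G p := by
      rw [fderiv_fun_add (hdF.const_mul a) (hdG.const_mul b),
        fderiv_const_mul hdF a, fderiv_const_mul hdG b]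
    have hDc := hD _ hcomb p
    rw [hfd, map_add, map_smul, map_smul, ← hD F hF p, ← hD G hG p] at hDc
    rw [Prod.ext_iff] at hDc
    obtain ⟨h1, h2⟩ := hDc
    simp only [Prod.fst_add, Prod.snd_add, Prod.smul_fst, Prod.smul_snd] at h1 h2
    simp only [matchedLiePoisson, h1, h2, map_add, map_smul, LinearMap.add_apply,
      LinearMap.smul_apply, smul_eq_mul]
    ring
  · -- antisymmetry
    intro F G hF hG p
    simp only [matchedLiePoisson]
    rw [skg (Dg F p) (Dg G p), skh (Dh F p) (Dh G p)]
    simp only [map_neg, ContinuousLinearMap.neg_apply]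
    ring
  · -- Jacobi identity
    intro F G E hF hG hE p
    -- expansion of a double bracket
    have hexp : ∀ (X Y Z : (𝔤 →L[ℝ] ℝ) × (𝔥 →L[ℝ] ℝ) → ℝ),
        ContDiff ℝ (⊤ : ℕ∞) X → ContDiff ℝ (⊤ : ℕ∞) Y → ContDiff ℝ (⊤ : ℕ∞) Z →
        matchedLiePoisson brg brh lact ract Dg Dh
            (fun q => matchedLiePoisson brg brh lact ract Dg Dh X Y q) Z p
          = mlpPair (mlpBr brg brh lact ract
                (mlpBr brg brh lact ract (mlpIota (fderiv ℝ X p)) (mlpIota (fderiv ℝ Y p)))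
                (mlpIota (fderiv ℝ Z p))) p
            + fderiv ℝ (fderiv ℝ X) p
                (mlpCoad (mlpBr brg brh lact ract) p (mlpIota (fderiv ℝ Z p)))
                (mlpCoad (mlpBr brg brh lact ract) p (mlpIota (fderiv ℝ Y p)))
            - fderiv ℝ (fderiv ℝ Y) p
                (mlpCoad (mlpBr brg brh lact ract) p (mlpIota (fderiv ℝ Z p)))
                (mlpCoad (mlpBr brg brh lact ract) p (mlpIota (fderiv ℝ X p))) := by
      intro X Y Z hX hY hZ
      have hXY : (fun q => matchedLiePoisson brg brh lact ract Dg Dh X Y q)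
          = fun q => mlpPair (mlpBr brg brh lact ract
              (mlpIota (fderiv ℝ X q)) (mlpIota (fderiv ℝ Y q))) q := by
        funext q
        rw [hmlp X Y q, hD X hX q, hD Y hY q]
      have hXYs : ContDiff ℝ (⊤ : ℕ∞)
          (fun q => matchedLiePoisson brg brh lact ract Dg Dh X Y q) := by
        rw [hXY]
        exact mlp_bracket_contDiff (mlpBr brg brh lact ract) X Y hX hY
      rw [hmlp _ Z p, hD _ hXYs p, hD Z hZ p,
        ← mlpCoad_spec (mlpBr brg brh lact ract) p (mlpIota (fderiv ℝ Z p)),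
        mlpPair_iota_apply, hXY,
        mlp_bracket_fderiv (mlpBr brg brh lact ract) X Y hX hY p,
        mlpCoad_spec,
        ← mlpCoad_spec (mlpBr brg brh lact ract) p (mlpIota (fderiv ℝ Y p))
          (mlpIota (fderiv ℝ (fderiv ℝ X) p
            (mlpCoad (mlpBr brg brh lact ract) p (mlpIota (fderiv ℝ Z p))))),
        mlpPair_iota_apply,
        skB (mlpIota (fderiv ℝ X p))
          (mlpIota (fderiv ℝ (fderiv ℝ Y) p
            (mlpCoad (mlpBr brg brh lact ract) p (mlpIota (fderiv ℝ Z p))))),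
        map_neg, ContinuousLinearMap.neg_apply,
        ← mlpCoad_spec (mlpBr brg brh lact ract) p (mlpIota (fderiv ℝ X p))
          (mlpIota (fderiv ℝ (fderiv ℝ Y) p
            (mlpCoad (mlpBr brg brh lact ract) p (mlpIota (fderiv ℝ Z p))))),
        mlpPair_iota_apply]
      ring
    rw [hexp F G E hF hG hE, hexp G E F hG hE hF, hexp E F G hE hF hG]
    have hsymF := (hF.contDiffAt (x := p)).isSymmSndFDerivAt (by simpa using mlp_two_le)
    have hsymG := (hG.contDiffAt (x := p)).isSymmSndFDerivAt (by simpa using mlp_two_le)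
    have hsymE := (hE.contDiffAt (x := p)).isSymmSndFDerivAt (by simpa using mlp_two_le)
    have hjac := mlpBr_jacobi brg brh lact ract hg_alt hg_jacobi hh_alt hh_jacobi
      hlact hract hcomp₁ hcomp₂ (mlpIota (fderiv ℝ F p)) (mlpIota (fderiv ℝ G p))
      (mlpIota (fderiv ℝ E p))
    have hsum : mlpPair (mlpBr brg brh lact ract
          (mlpBr brg brh lact ract (mlpIota (fderiv ℝ F p)) (mlpIota (fderiv ℝ G p)))
          (mlpIota (fderiv ℝ E p))) p
        + mlpPair (mlpBr brg brh lact ract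
            (mlpBr brg brh lact ract (mlpIota (fderiv ℝ G p)) (mlpIota (fderiv ℝ E p)))
            (mlpIota (fderiv ℝ F p))) p
        + mlpPair (mlpBr brg brh lact ract
            (mlpBr brg brh lact ract (mlpIota (fderiv ℝ E p)) (mlpIota (fderiv ℝ F p)))
            (mlpIota (fderiv ℝ G p))) p = 0 := by
      rw [← ContinuousLinearMap.add_apply, ← map_add, ← ContinuousLinearMap.add_apply,
        ← map_add, hjac]
      simp
    linarith [hsum,
      hsymF (mlpCoad (mlpBr brg brh lact ract) p (mlpIota (fderiv ℝ E p)))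
        (mlpCoad (mlpBr brg brh lact ract) p (mlpIota (fderiv ℝ G p))),
      hsymG (mlpCoad (mlpBr brg brh lact ract) p (mlpIota (fderiv ℝ E p)))
        (mlpCoad (mlpBr brg brh lact ract) p (mlpIota (fderiv ℝ F p))),
      hsymE (mlpCoad (mlpBr brg brh lact ract) p (mlpIota (fderiv ℝ F p)))
        (mlpCoad (mlpBr brg brh lact ract) p (mlpIota (fderiv ℝ G p)))]
end

section
/- The map φ from the group K = {(a, b, c) ∈ ℝ³ : c > −1} (with operation (a₁, b₁, c₁) ∗ (a₂, b₂, c₂) = (1 + c₂) · (a₁, b₁, c₁) + (a₂, b₂, c₂)) to SL(2, ℂ) defined by φ(a, b, c) = (1 + c)^{−1/2} · [[1 + c, 0], [a + ib, 1]] is a well-defined injective group homomorphism; in particular each φ(a, b, c) has determinant 1 and φ((a₁,b₁,c₁) ∗ (a₂,b₂,c₂)) = φ(a₁,b₁,c₁) · φ(a₂,b₂,c₂). -/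
open Matrix Complex

/-- The group operation on `K = {(a, b, c) ∈ ℝ³ : c > −1}`:
`(a₁, b₁, c₁) ∗ (a₂, b₂, c₂) = (1 + c₂) • (a₁, b₁, c₁) + (a₂, b₂, c₂)`. -/
def Kop (p q : ℝ × ℝ × ℝ) : ℝ × ℝ × ℝ :=
  (1 + q.2.2) • p + q

/-- The map `φ(a, b, c) = (1 + c)^{−1/2} • [[1 + c, 0], [a + ib, 1]]`, where
`(1 + c)^{−1/2}` is the inverse of the positive real square root of `1 + c`. -/
noncomputable def Kphi (p : ℝ × ℝ × ℝ) : Matrix (Fin 2) (Fin 2) ℂ :=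
  (((Real.sqrt (1 + p.2.2))⁻¹ : ℝ) : ℂ) •
    !![((1 + p.2.2 : ℝ) : ℂ), 0; (p.1 : ℂ) + (p.2.1 : ℂ) * Complex.I, 1]

/-- The map `φ : K → SL(2, ℂ)`, `φ(a, b, c) = (1 + c)^{−1/2} • [[1 + c, 0], [a + ib, 1]]`,
is a well-defined injective group homomorphism; in particular each `φ(a, b, c)` has
determinant `1`, and `φ((a₁,b₁,c₁) ∗ (a₂,b₂,c₂)) = φ(a₁,b₁,c₁) · φ(a₂,b₂,c₂)`. -/
theorem Kphi_injective_hom :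
    -- well-definedness: `φ` lands in `SL(2, ℂ)`
    (∀ p : ℝ × ℝ × ℝ, p.2.2 > -1 → (Kphi p).det = 1) ∧
    -- `φ` is a group homomorphism
    (∀ p q : ℝ × ℝ × ℝ, p.2.2 > -1 → q.2.2 > -1 →
      Kphi (Kop p q) = Kphi p * Kphi q) ∧
    -- `φ` is injective
    Set.InjOn Kphi {p : ℝ × ℝ × ℝ | p.2.2 > -1} := by
  refine ⟨?_, ?_, ?_⟩
  · intro p hp
    have h1 : (0:ℝ) < 1 + p.2.2 := by linarith
    have hs : Real.sqrt (1 + p.2.2) ^ 2 = 1 + p.2.2 := Real.sq_sqrt h1.le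
    have hs0 : Real.sqrt (1 + p.2.2) ≠ 0 := by positivity
    have hC : ((Real.sqrt (1 + p.2.2) : ℝ) : ℂ) ≠ 0 := by exact_mod_cast hs0
    rw [Kphi, det_smul, det_fin_two_of]
    simp only [Fintype.card_fin, zero_mul, sub_zero, mul_one]
    rw [show ((1 + p.2.2 : ℝ) : ℂ) = ((Real.sqrt (1 + p.2.2) : ℝ) : ℂ) ^ 2 from by
      exact_mod_cast hs.symm]
    push_cast
    rw [inv_pow, inv_mul_cancel₀ (pow_ne_zero 2 hC)]
  · intro p q hp hq
    have h1 : (0:ℝ) < 1 + p.2.2 := by linarith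
    have h2 : (0:ℝ) < 1 + q.2.2 := by linarith
    have hsp : Real.sqrt (1 + p.2.2) ^ 2 = 1 + p.2.2 := Real.sq_sqrt h1.le
    have hsq : Real.sqrt (1 + q.2.2) ^ 2 = 1 + q.2.2 := Real.sq_sqrt h2.le
    have hsp0 : Real.sqrt (1 + p.2.2) ≠ 0 := by positivity
    have hsq0 : Real.sqrt (1 + q.2.2) ≠ 0 := by positivity
    have hmul : Real.sqrt (1 + (Kop p q).2.2) =
        Real.sqrt (1 + p.2.2) * Real.sqrt (1 + q.2.2) := by
      rw [← Real.sqrt_mul h1.le]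
      congr 1
      simp [Kop]
      ring
    simp only [Kphi, hmul, smul_mul_smul_comm]
    congr 1
    · push_cast
      ring
    · ext i j
      fin_cases i <;> fin_cases j <;>
        simp [Kop, Matrix.mul_apply, Fin.sum_univ_two] <;> push_cast <;> ring
  · intro p hp q hq h
    simp only [Set.mem_setOf_eq] at hp hq
    have h1 : (0:ℝ) < 1 + p.2.2 := by linarith
    have h2 : (0:ℝ) < 1 + q.2.2 := by linarith
    have hsp0 : Real.sqrt (1 + p.2.2) ≠ 0 := by positivity
    have hsq0 : Real.sqrt (1 + q.2.2) ≠ 0 := by positivity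
    have h11 := congrArg (fun M => M 1 1) h
    simp only [Kphi, Matrix.smul_apply, Matrix.of_apply] at h11
    simp [Matrix.cons_val_one, Matrix.head_cons] at h11
    field_simp at h11
    have hc : p.2.2 = q.2.2 := by
      have e := congrArg (fun x => x ^ 2) h11
      simp only [Real.sq_sqrt h1.le, Real.sq_sqrt h2.le] at e
      linarith
    have h10 := congrArg (fun M => M 1 0) h
    simp only [Kphi, Matrix.smul_apply, Matrix.of_apply] at h10
    simp [hc] at h10
    rcases h10 with h10 | h10
    · have hab : (p.1 : ℂ) + p.2.1 * Complex.I = q.1 + q.2.1 * Complex.I := h10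
      have ha : p.1 = q.1 := by
        have := congrArg Complex.re hab; simpa using this
      have hb : p.2.1 = q.2.1 := by
        have := congrArg Complex.im hab; simpa using this
      exact Prod.ext ha (Prod.ext hb hc)
    · exfalso
      rw [hc] at hsp0
      exact hsp0 (by exact_mod_cast h10)
end

section
/- The vector space ℝ³ equipped with the bracket [Y₁, Y₂] := k × (Y₁ × Y₂), where × is the cross product and k = (0, 0, 1), is a Lie algebra: the bracket is bilinear, alternating ([Y, Y] = 0), and satisfies the Jacobi identity [[Y₁, Y₂], Y₃] + [[Y₂, Y₃], Y₁] + [[Y₃, Y₁], Y₂] = 0. -/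
/-- The standard cross product on `ℝ³` (written as `ℝ × ℝ × ℝ`). -/
def cross3 (v w : ℝ × ℝ × ℝ) : ℝ × ℝ × ℝ :=
  (v.2.1 * w.2.2 - v.2.2 * w.2.1,
   v.2.2 * w.1 - v.1 * w.2.2,
   v.1 * w.2.1 - v.2.1 * w.1)

/-- The bracket `[Y₁, Y₂] = k × (Y₁ × Y₂)` on `ℝ³`, where `k = (0, 0, 1)`. -/
def Kbracket (Y₁ Y₂ : ℝ × ℝ × ℝ) : ℝ × ℝ × ℝ :=
  cross3 ((0, 0, 1) : ℝ × ℝ × ℝ) (cross3 Y₁ Y₂)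

/-- `ℝ³` with the bracket `[Y₁, Y₂] = k × (Y₁ × Y₂)`, `k = (0, 0, 1)`, is a Lie
algebra: the bracket is bilinear, alternating and satisfies the Jacobi identity. -/
theorem Kbracket_lieAlgebra :
    -- bilinearity
    (∀ X Y Z : ℝ × ℝ × ℝ, Kbracket (X + Y) Z = Kbracket X Z + Kbracket Y Z) ∧
    (∀ X Y Z : ℝ × ℝ × ℝ, Kbracket X (Y + Z) = Kbracket X Y + Kbracket X Z) ∧
    (∀ (a : ℝ) (X Y : ℝ × ℝ × ℝ), Kbracket (a • X) Y = a • Kbracket X Y) ∧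
    (∀ (a : ℝ) (X Y : ℝ × ℝ × ℝ), Kbracket X (a • Y) = a • Kbracket X Y) ∧
    -- alternating
    (∀ Y : ℝ × ℝ × ℝ, Kbracket Y Y = 0) ∧
    -- the Jacobi identity
    (∀ Y₁ Y₂ Y₃ : ℝ × ℝ × ℝ,
      Kbracket (Kbracket Y₁ Y₂) Y₃ + Kbracket (Kbracket Y₂ Y₃) Y₁
        + Kbracket (Kbracket Y₃ Y₁) Y₂ = 0) := by
  refine ⟨?_, ?_, ?_, ?_, ?_, ?_⟩ <;>
    intros <;>
    simp only [Kbracket, cross3, Prod.mk_add_mk, Prod.mk.injEq, Prod.ext_iff,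
      Prod.fst_add, Prod.snd_add, Prod.smul_mk, Prod.fst_zero, Prod.snd_zero,
      Prod.smul_fst, Prod.smul_snd, smul_eq_mul] <;>
    refine ⟨by ring, by ring, by ring⟩
end
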